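/- arXiv:1711.01816 — 2 statements merged into one kernel-verified Lean document; each statement's English description precedes it below -/
import Mathlib

section
/- If C is a Z₂Z₄[ξ]-linear code of type (r,s;k₀;k₁,k₂), where ξ is a root of an irreducible polynomial of degree t, then C has exactly 2^{t(k₀ + 2k₁ + k₂)} codewords. -/
set_option synthInstance.maxHeartbeats 1000000
set_option maxHeartbeats 2000000

noncomputable section
open Polynomial

abbrev Z4 : Type := ZMod 4
abbrev Z2 : Type := ZMod 2

/-- The mod 2 reduction map `Z₄ → Z₂`. -/
def bar : Z4 →+* Z2 := ZMod.castHom (m := 2) (by norm_num) Z2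

/-- The ring `R₄ = Z₄[x]/⟨h⟩` (for `h` basic primitive, the Galois ring `GR(4,m)`). -/
abbrev R4 (h : Z4[X]) : Type := Z4[X] ⧸ Ideal.span {h}

/-- The ring `R₂ = Z₂[x]/⟨h̄⟩` (for `h` basic primitive, the field `F_{2^m}`). -/
abbrev R2 (h : Z4[X]) : Type := Z2[X] ⧸ Ideal.span {h.map bar}

/-- `ξ`, the class of `x` in `R₄`. -/
def xi (h : Z4[X]) : R4 h := Ideal.Quotient.mk _ X

/-- `ξ̄`, the class of `x` in `R₂`. -/
def xibar (h : Z4[X]) : R2 h := Ideal.Quotient.mk _ X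

/-- The coefficientwise mod 2 reduction `R₄ → R₂`. -/
def barR (h : Z4[X]) : R4 h →+* R2 h :=
  Ideal.quotientMap (Ideal.span {h.map bar}) (Polynomial.mapRingHom bar)
    (by
      rw [Ideal.span_le]
      intro p hp
      simp only [Set.mem_singleton_iff] at hp
      subst hp
      exact Ideal.mem_comap.mpr (Ideal.subset_span (by simp)))

/-- The canonical representative (of degree `< deg h`) of an element of `R₄`. -/
def rep4 (h : Z4[X]) (α : R4 h) : Z4[X] := Quotient.out α %ₘ h

/-- The canonical representative (of degree `< deg h̄`) of an element of `R₂`. -/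
def rep2 (h : Z4[X]) (α : R2 h) : Z2[X] := Quotient.out α %ₘ (h.map bar)

/-- The Frobenius map `θ₄ : ∑ vᵢ ξ^i ↦ ∑ vᵢ ξ^{2i}` of `R₄`, as a bare function:
substitute `ξ²` in the canonical representative. -/
def thetaFun4 (h : Z4[X]) (α : R4 h) : R4 h := Polynomial.aeval (xi h ^ 2) (rep4 h α)

/-- The Frobenius map `θ₂ : ∑ vᵢ ξ̄^i ↦ ∑ vᵢ ξ̄^{2i}` of `R₂`, as a bare function. -/
def thetaFun2 (h : Z4[X]) (α : R2 h) : R2 h := Polynomial.aeval (xibar h ^ 2) (rep2 h α)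

/-- A lift `ι : R₂ → R₄` with `ι` mod 2 the identity: lift the coefficients of the
canonical representative from `{0,1}`. -/
def iota (h : Z4[X]) (α : R2 h) : R4 h :=
  Ideal.Quotient.mk _ ((rep2 h α).sum fun i a => C ((a.val : Z4)) * X ^ i)

/-- `h` is a monic basic primitive polynomial of degree `m`:  `h` is monic, its mod 2
reduction `h̄` is irreducible over `Z₂`, and the root `ξ̄` of `h̄` is a primitive
element, i.e. has multiplicative order `2^m - 1`. -/
def BasicPrimitive (h : Z4[X]) (m : ℕ) : Prop :=
  h.Monic ∧ h.natDegree = m ∧ Irreducible (h.map bar) ∧ orderOf (xibar h) = 2 ^ m - 1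

/-- The scalar multiplication `γ * (α,β) = (γ̄α, γβ)` making `R₂^r × R₄^s` (or any
mixed-alphabet tuple space) an `R₄`-module. -/
def smulStar (h : Z4[X]) {α β : Type*} (γ : R4 h) (v : (α → R2 h) × (β → R4 h)) :
    (α → R2 h) × (β → R4 h) :=
  (fun i => barR h γ * v.1 i, fun j => γ * v.2 j)


/-- A `Z₂Z₄[ξ]`-linear code: an `R₄`-submodule of `R₂^r × R₄^s` (as a set). -/
def IsZ2Z4Linear (h : Z4[X]) {r s : ℕ} (C : Set ((Fin r → R2 h) × (Fin s → R4 h))) : Prop :=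
  0 ∈ C ∧ (∀ u ∈ C, ∀ v ∈ C, u + v ∈ C) ∧ ∀ γ : R4 h, ∀ u ∈ C, smulStar h γ u ∈ C

/-! ### Standard generator and parity-check matrices -/

/-- The set of all `R₄`-linear combinations (via the action `*`) of a finite family of
rows in `R₂^α × R₄^β`. -/
def rowSpan (h : Z4[X]) {ι α β : Type*} [Fintype ι]
    (rows : ι → (α → R2 h) × (β → R4 h)) : Set ((α → R2 h) × (β → R4 h)) :=
  {v | ∃ c : ι → R4 h, v = ∑ i, smulStar h (c i) (rows i)}

/-- The rows of the standard form generator matrix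
`G = [[I_{k₀}, Ā₀₁ | 0, 0, 2T], [0, S | I_{k₁}, A₀₁, A₀₂], [0, 0 | 0, 2I_{k₂}, 2A₁₂]]`. -/
def stdGenRows (h : Z4[X]) {r s k0 k1 k2 : ℕ}
    (A01b : Matrix (Fin k0) (Fin (r - k0)) (R2 h))
    (S : Matrix (Fin k1) (Fin (r - k0)) (R2 h))
    (T : Matrix (Fin k0) (Fin (s - k1 - k2)) (R4 h))
    (A01 : Matrix (Fin k1) (Fin k2) (R4 h))
    (A02 : Matrix (Fin k1) (Fin (s - k1 - k2)) (R4 h))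
    (A12 : Matrix (Fin k2) (Fin (s - k1 - k2)) (R4 h)) :
    (Fin k0 ⊕ Fin k1 ⊕ Fin k2) →
      ((Fin k0 ⊕ Fin (r - k0)) → R2 h) × ((Fin k1 ⊕ Fin k2 ⊕ Fin (s - k1 - k2)) → R4 h) :=
  fun row =>
    (fun col =>
      match row, col with
      | .inl i, .inl j => if i = j then 1 else 0
      | .inl i, .inr j => A01b i j
      | .inr (.inl i), .inr j => S i j
      | _, _ => 0,
     fun col =>
      match row, col with
      | .inl i, .inr (.inr j) => 2 * T i j
      | .inr (.inl i), .inl j => if i = j then 1 else 0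
      | .inr (.inl i), .inr (.inl j) => A01 i j
      | .inr (.inl i), .inr (.inr j) => A02 i j
      | .inr (.inr i), .inr (.inl j) => if i = j then 2 else 0
      | .inr (.inr i), .inr (.inr j) => 2 * A12 i j
      | _, _ => 0)

/-- `C` is (permutation equivalent to) a code of type `(r,s;k₀;k₁,k₂)`:  after a
permutation of the first `r` and of the last `s` coordinates (encoded by the
relabelings `e2`, `e4`) the code is exactly the `R₄`-span of the rows of the standard
form generator matrix. -/
def IsTypeCode (h : Z4[X]) (r s k0 k1 k2 : ℕ)
    (C : Set ((Fin r → R2 h) × (Fin s → R4 h))) : Prop :=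
  ∃ (A01b : Matrix (Fin k0) (Fin (r - k0)) (R2 h))
    (S : Matrix (Fin k1) (Fin (r - k0)) (R2 h))
    (T : Matrix (Fin k0) (Fin (s - k1 - k2)) (R4 h))
    (A01 : Matrix (Fin k1) (Fin k2) (R4 h))
    (A02 : Matrix (Fin k1) (Fin (s - k1 - k2)) (R4 h))
    (A12 : Matrix (Fin k2) (Fin (s - k1 - k2)) (R4 h))
    (e2 : Fin r ≃ (Fin k0 ⊕ Fin (r - k0)))
    (e4 : Fin s ≃ (Fin k1 ⊕ Fin k2 ⊕ Fin (s - k1 - k2))),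
    (fun v : (Fin r → R2 h) × (Fin s → R4 h) => (v.1 ∘ e2.symm, v.2 ∘ e4.symm)) '' C
      = rowSpan h (stdGenRows h A01b S T A01 A02 A12)

/-- The inner product
`⟨u,v⟩ = 2 ∑ᵢ ι(aᵢdᵢ) + ∑ⱼ bⱼeⱼ ∈ R₄` on `R₂^α × R₄^β`. -/
def innerP (h : Z4[X]) {α β : Type*} [Fintype α] [Fintype β]
    (u v : (α → R2 h) × (β → R4 h)) : R4 h :=
  2 * ∑ i, iota h (u.1 i * v.1 i) + ∑ j, u.2 j * v.2 j

/-- The dual code `C⊥ = {v : ⟨u,v⟩ = 0 for all u ∈ C}`. -/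
def dualCode (h : Z4[X]) {α β : Type*} [Fintype α] [Fintype β]
    (C : Set ((α → R2 h) × (β → R4 h))) : Set ((α → R2 h) × (β → R4 h)) :=
  {v | ∀ u ∈ C, innerP h u v = 0}

/-- The rows of the standard form parity-check matrix
`H = [[−Ā₀₁ᵀ, I_{r−k₀} | −2Sᵀ, 0, 0], [−Tᵀ, 0 | −A₀₂ᵀ + A₁₂ᵀA₀₁ᵀ, −A₁₂ᵀ, I_{s−k₁−k₂}],
[0, 0 | −2A₀₁ᵀ, 2I_{k₂}, 0]]`. -/
def stdParityRows (h : Z4[X]) {r s k0 k1 k2 : ℕ}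
    (A01b : Matrix (Fin k0) (Fin (r - k0)) (R2 h))
    (S : Matrix (Fin k1) (Fin (r - k0)) (R2 h))
    (T : Matrix (Fin k0) (Fin (s - k1 - k2)) (R4 h))
    (A01 : Matrix (Fin k1) (Fin k2) (R4 h))
    (A02 : Matrix (Fin k1) (Fin (s - k1 - k2)) (R4 h))
    (A12 : Matrix (Fin k2) (Fin (s - k1 - k2)) (R4 h)) :
    (Fin (r - k0) ⊕ Fin (s - k1 - k2) ⊕ Fin k2) →
      ((Fin k0 ⊕ Fin (r - k0)) → R2 h) × ((Fin k1 ⊕ Fin k2 ⊕ Fin (s - k1 - k2)) → R4 h) :=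
  fun row =>
    (fun col =>
      match row, col with
      | .inl i, .inl j => -(A01b j i)
      | .inl i, .inr j => if i = j then 1 else 0
      | .inr (.inl i), .inl j => -(barR h (T j i))
      | _, _ => 0,
     fun col =>
      match row, col with
      | .inl i, .inl j => -(2 * iota h (S j i))
      | .inr (.inl i), .inl j => -(A02 j i) + ∑ c, A12 c i * A01 j c
      | .inr (.inl i), .inr (.inl j) => -(A12 j i)
      | .inr (.inl i), .inr (.inr j) => if i = j then 1 else 0
      | .inr (.inr i), .inl j => -(2 * A01 j i)
      | .inr (.inr i), .inr (.inl j) => if i = j then 2 else 0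
      | _, _ => 0)

lemma map_bar_eq_zero_iff (u : Z4[X]) : u.map bar = 0 ↔ ∃ w, u = 2 * w := by
  constructor
  · intro hu
    refine ⟨⟨.ofCoeff (u.toFinsupp.coeff.mapRange (fun a => if a = 2 then 1 else 0) (by decide))⟩, ?_⟩
    ext n
    have h0 : bar (u.coeff n) = 0 := by
      have := congrArg (fun p => Polynomial.coeff p n) hu
      simpa [Polynomial.coeff_map] using this
    have key : ∀ a : Z4, bar a = 0 → 2 * (if a = 2 then 1 else 0 : Z4) = a := by decide
    have : (⟨.ofCoeff (u.toFinsupp.coeff.mapRange (fun a => if a = 2 then 1 else 0) (by decide))⟩ : Z4[X]).coeff n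
        = (if u.coeff n = 2 then 1 else 0 : Z4) := by
      simp [Polynomial.coeff, Finsupp.mapRange_apply]
      rfl
    rw [Polynomial.coeff_ofNat_mul, this, key _ h0]
  · rintro ⟨w, rfl⟩
    rw [Polynomial.map_mul, Polynomial.map_ofNat]
    have h1 : ((2:ℕ):Z2[X]) = 2 := by norm_cast
    rw [← h1, ← Polynomial.C_eq_natCast,
      show ((2:ℕ):Z2) = 0 from by decide, map_zero, zero_mul]

lemma barR_mk (h : Z4[X]) (p : Z4[X]) :
    barR h (Ideal.Quotient.mk _ p) = Ideal.Quotient.mk _ (p.map bar) := by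
  simp [barR, Ideal.quotientMap_mk, Polynomial.coe_mapRingHom]

lemma barR_surjective (h : Z4[X]) : Function.Surjective (barR h) := by
  intro y
  obtain ⟨q, rfl⟩ := Ideal.Quotient.mk_surjective y
  obtain ⟨p, rfl⟩ := Polynomial.map_surjective bar (by decide) q
  exact ⟨Ideal.Quotient.mk _ p, barR_mk h p⟩

lemma two_mul_two (h : Z4[X]) : (2 : R4 h) * 2 = 0 := by
  have : ((2:R4 h)) = algebraMap Z4 (R4 h) 2 := (map_ofNat _ 2).symm
  rw [this, ← map_mul, show (2:Z4)*2 = 0 from by decide, map_zero]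

lemma barR_eq_zero_iff (h : Z4[X]) (β : R4 h) :
    barR h β = 0 ↔ ∃ δ : R4 h, β = 2 * δ := by
  obtain ⟨p, rfl⟩ := Ideal.Quotient.mk_surjective β
  rw [barR_mk]
  constructor
  · intro h0
    rw [Ideal.Quotient.eq_zero_iff_mem, Ideal.mem_span_singleton'] at h0
    obtain ⟨a, ha⟩ := h0
    obtain ⟨b, rfl⟩ := Polynomial.map_surjective bar (by decide) a
    have : ((p - b * h).map bar) = 0 := by
      rw [Polynomial.map_sub, Polynomial.map_mul, ha, sub_self]
    obtain ⟨w, hw⟩ := (map_bar_eq_zero_iff _).mp this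
    refine ⟨Ideal.Quotient.mk _ w, ?_⟩
    have hp : p = b * h + 2 * w := by linear_combination hw
    rw [hp, map_add, map_mul, map_mul]
    have hh : Ideal.Quotient.mk (Ideal.span {h}) h = 0 := by
      rw [Ideal.Quotient.eq_zero_iff_mem]; exact Ideal.subset_span rfl
    rw [hh, mul_zero, zero_add, map_ofNat]
  · rintro ⟨δ, hδ⟩
    obtain ⟨w, rfl⟩ := Ideal.Quotient.mk_surjective δ
    have : Ideal.Quotient.mk (Ideal.span {h}) (p - 2 * w) = 0 := by
      rw [map_sub, hδ, map_mul, map_ofNat, sub_self]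
    rw [Ideal.Quotient.eq_zero_iff_mem, Ideal.mem_span_singleton'] at this
    obtain ⟨a, ha⟩ := this
    have : p.map bar = (a * h).map bar := by
      have hp : p = a * h + 2 * w := by linear_combination ha.symm
      rw [hp, Polynomial.map_add, Polynomial.map_mul, Polynomial.map_mul,
        Polynomial.map_ofNat]
      have h1 : ((2:ℕ):Z2[X]) = 2 := by norm_cast
      rw [← h1, ← Polynomial.C_eq_natCast, show ((2:ℕ):Z2) = 0 from by decide,
        map_zero, zero_mul, add_zero]
    rw [this, Ideal.Quotient.eq_zero_iff_mem, Polynomial.map_mul]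
    exact Ideal.mul_mem_left _ _ (Ideal.subset_span rfl)

lemma two_mul_eq_zero_of_barR (h : Z4[X]) (β : R4 h) (h0 : barR h β = 0) :
    β + β = 0 := by
  obtain ⟨δ, rfl⟩ := (barR_eq_zero_iff h β).mp h0
  have : (2:R4 h) * δ + 2 * δ = (2 * 2) * δ := by ring
  rw [this, two_mul_two, zero_mul]

lemma barR_eq_zero_of_two_mul (h : Z4[X]) (hm : h.Monic) (β : R4 h)
    (h0 : β + β = 0) : barR h β = 0 := by
  obtain ⟨p, rfl⟩ := Ideal.Quotient.mk_surjective β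
  rw [← map_add, Ideal.Quotient.eq_zero_iff_mem, Ideal.mem_span_singleton'] at h0
  obtain ⟨a, ha⟩ := h0
  have hbar : (p + p).map bar = 0 := by
    ext n
    simp only [Polynomial.coeff_map, Polynomial.coeff_add, Polynomial.coeff_zero, map_add]
    have : ∀ x : Z2, x + x = 0 := by decide
    exact this _
  have h2 : a.map bar * h.map bar = 0 := by
    rw [← Polynomial.map_mul, ha, hbar]
  have hhne : h.map bar ≠ 0 := (hm.map bar).ne_zero
  have ha0 : a.map bar = 0 := by
    rcases mul_eq_zero.mp h2 with h' | h'
    · exact h'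
    · exact absurd h' hhne
  obtain ⟨w, rfl⟩ := (map_bar_eq_zero_iff a).mp ha0
  have key : (p - w * h) + (p - w * h) = 0 := by linear_combination ha.symm
  have : ((p - w * h).map bar) = 0 := by
    ext n
    have hc := congrArg (fun q => Polynomial.coeff q n) key
    simp only [Polynomial.coeff_add, Polynomial.coeff_zero] at hc
    simp only [Polynomial.coeff_map, Polynomial.coeff_zero]
    have : ∀ x : Z4, x + x = 0 → bar x = 0 := by decide
    exact this _ hc
  obtain ⟨v, hv⟩ := (map_bar_eq_zero_iff _).mp this
  rw [barR_mk, Ideal.Quotient.eq_zero_iff_mem]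
  have hp : p.map bar = (w.map bar) * (h.map bar) + (2 * v).map bar := by
    rw [← Polynomial.map_mul, ← Polynomial.map_add]
    congr 1
    linear_combination hv
  rw [hp]
  have h2v : (2 * v).map bar = 0 := (map_bar_eq_zero_iff _).mpr ⟨v, rfl⟩
  rw [h2v, add_zero]
  exact Ideal.mul_mem_left _ _ (Ideal.subset_span rfl)

def e4equiv (h : Z4[X]) (hm : h.Monic) : R4 h ≃ (Fin h.natDegree → Z4) :=
  (AdjoinRoot.powerBasis' hm).basis.equivFun.toEquiv

def e2equiv (h : Z4[X]) (hm : h.Monic) : R2 h ≃ (Fin h.natDegree → Z2) :=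
  ((AdjoinRoot.powerBasis' (hm.map bar)).basis.equivFun.toEquiv).trans
    (Equiv.arrowCongr (finCongr (hm.natDegree_map bar)) (Equiv.refl _))

lemma card_R4 (h : Z4[X]) (hm : h.Monic) : Nat.card (R4 h) = 4 ^ h.natDegree := by
  rw [Nat.card_congr (e4equiv h hm), Nat.card_pi]
  simp [Nat.card_eq_fintype_card]

lemma card_R2 (h : Z4[X]) (hm : h.Monic) : Nat.card (R2 h) = 2 ^ h.natDegree := by
  rw [Nat.card_congr (e2equiv h hm), Nat.card_pi]
  simp [Nat.card_eq_fintype_card]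

instance : Finite Z4 := inferInstance

lemma finite_R4 (h : Z4[X]) (hm : h.Monic) : Finite (R4 h) :=
  Finite.of_equiv _ (e4equiv h hm).symm

lemma finite_R2 (h : Z4[X]) (hm : h.Monic) : Finite (R2 h) :=
  Finite.of_equiv _ (e2equiv h hm).symm

lemma card_ker_barR (h : Z4[X]) (hm : h.Monic) :
    Nat.card {β : R4 h // barR h β = 0} = 2 ^ h.natDegree := by
  haveI := finite_R4 h hm
  haveI := finite_R2 h hm
  set φ := (barR h).toAddMonoidHom with hφ
  have hsurj : Function.Surjective φ := barR_surjective h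
  have h1 : Nat.card (R4 h) = Nat.card (R4 h ⧸ φ.ker) * Nat.card φ.ker :=
    AddSubgroup.card_eq_card_quotient_mul_card_addSubgroup φ.ker
  have h2 : Nat.card (R4 h ⧸ φ.ker) = Nat.card (R2 h) :=
    Nat.card_congr (QuotientAddGroup.quotientKerEquivOfSurjective φ hsurj).toEquiv
  have h3 : Nat.card {β : R4 h // barR h β = 0} = Nat.card φ.ker :=
    Nat.card_congr (Equiv.subtypeEquivRight fun x => (AddMonoidHom.mem_ker (f := φ)).symm)
  rw [h3]
  have h4 : (4:ℕ) ^ h.natDegree = 2 ^ h.natDegree * 2 ^ h.natDegree := by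
    rw [← mul_pow]; norm_num
  have := h1
  rw [card_R4 h hm, h2, card_R2 h hm, h4] at this
  exact (Nat.eq_of_mul_eq_mul_left (by positivity) this.symm)

section Gen

variable (h : Z4[X]) {r s k0 k1 k2 : ℕ}
    (A01b : Matrix (Fin k0) (Fin (r - k0)) (R2 h))
    (S : Matrix (Fin k1) (Fin (r - k0)) (R2 h))
    (T : Matrix (Fin k0) (Fin (s - k1 - k2)) (R4 h))
    (A01 : Matrix (Fin k1) (Fin k2) (R4 h))
    (A02 : Matrix (Fin k1) (Fin (s - k1 - k2)) (R4 h))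
    (A12 : Matrix (Fin k2) (Fin (s - k1 - k2)) (R4 h))

lemma smulStar_add {α β : Type*} (γ γ' : R4 h) (v : (α → R2 h) × (β → R4 h)) :
    smulStar h (γ + γ') v = smulStar h γ v + smulStar h γ' v := by
  unfold smulStar
  refine Prod.ext (funext fun i => ?_) (funext fun j => ?_) <;>
    simp [map_add, add_mul]

def genMap : ((Fin k0 ⊕ Fin k1 ⊕ Fin k2) → R4 h) →+
    (((Fin k0 ⊕ Fin (r - k0)) → R2 h) × ((Fin k1 ⊕ Fin k2 ⊕ Fin (s - k1 - k2)) → R4 h)) :=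
  AddMonoidHom.mk' (fun c => ∑ i, smulStar h (c i) (stdGenRows h A01b S T A01 A02 A12 i))
    (by
      intro c c'
      rw [← Finset.sum_add_distrib]
      exact Finset.sum_congr rfl fun i _ => by rw [Pi.add_apply, smulStar_add])

local notation "genF" => genMap h A01b S T A01 A02 A12

lemma genMap_fst_inl (c) (j : Fin k0) :
    (genF c).1 (Sum.inl j) = barR h (c (.inl j)) := by
  show (∑ i, smulStar h (c i) (stdGenRows h A01b S T A01 A02 A12 i)).1 (Sum.inl j) = _
  rw [Prod.fst_sum, Finset.sum_apply, Fintype.sum_sum_type, Fintype.sum_sum_type]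
  simp only [smulStar, stdGenRows, mul_ite, mul_one, mul_zero, Finset.sum_ite_eq,
    Finset.sum_ite_eq', Finset.mem_univ, if_true, Finset.sum_const_zero, add_zero, zero_add]

lemma genMap_fst_inr (c) (j : Fin (r - k0)) :
    (genF c).1 (Sum.inr j) = (∑ i, barR h (c (.inl i)) * A01b i j)
      + ∑ i, barR h (c (.inr (.inl i))) * S i j := by
  show (∑ i, smulStar h (c i) (stdGenRows h A01b S T A01 A02 A12 i)).1 (Sum.inr j) = _
  rw [Prod.fst_sum, Finset.sum_apply, Fintype.sum_sum_type, Fintype.sum_sum_type]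
  simp only [smulStar, stdGenRows, mul_zero, Finset.sum_const_zero, add_zero]

lemma genMap_snd_inl (c) (j : Fin k1) :
    (genF c).2 (Sum.inl j) = c (.inr (.inl j)) := by
  show (∑ i, smulStar h (c i) (stdGenRows h A01b S T A01 A02 A12 i)).2 (Sum.inl j) = _
  rw [Prod.snd_sum, Finset.sum_apply, Fintype.sum_sum_type, Fintype.sum_sum_type]
  simp only [smulStar, stdGenRows, mul_ite, mul_one, mul_zero, Finset.sum_ite_eq,
    Finset.sum_ite_eq', Finset.mem_univ, if_true, Finset.sum_const_zero, add_zero, zero_add]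

lemma genMap_snd_inr_inl (c) (j : Fin k2) :
    (genF c).2 (Sum.inr (Sum.inl j)) = (∑ i, c (.inr (.inl i)) * A01 i j)
      + c (.inr (.inr j)) * 2 := by
  show (∑ i, smulStar h (c i) (stdGenRows h A01b S T A01 A02 A12 i)).2 (Sum.inr (Sum.inl j)) = _
  rw [Prod.snd_sum, Finset.sum_apply, Fintype.sum_sum_type, Fintype.sum_sum_type]
  simp only [smulStar, stdGenRows, mul_ite, mul_one, mul_zero, Finset.sum_ite_eq,
    Finset.sum_ite_eq', Finset.mem_univ, if_true, Finset.sum_const_zero, add_zero, zero_add]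

lemma genMap_snd_inr_inr (c) (j : Fin (s - k1 - k2)) :
    (genF c).2 (Sum.inr (Sum.inr j)) = (∑ i, c (.inl i) * (2 * T i j))
      + ((∑ i, c (.inr (.inl i)) * A02 i j) + ∑ i, c (.inr (.inr i)) * (2 * A12 i j)) := by
  show (∑ i, smulStar h (c i) (stdGenRows h A01b S T A01 A02 A12 i)).2 (Sum.inr (Sum.inr j)) = _
  rw [Prod.snd_sum, Finset.sum_apply, Fintype.sum_sum_type, Fintype.sum_sum_type]
  simp only [smulStar, stdGenRows, mul_zero, Finset.sum_const_zero, add_zero, zero_add]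

lemma genMap_eq_zero_iff (hm : h.Monic) (c) :
    genF c = 0 ↔ (∀ i, barR h (c (.inl i)) = 0) ∧ (∀ j, c (.inr (.inl j)) = 0) ∧
      (∀ j, barR h (c (.inr (.inr j))) = 0) := by
  constructor
  · intro h0
    have h0fst : ∀ col, (genF c).1 col = 0 := fun col => by rw [h0]; rfl
    have h0snd : ∀ col, (genF c).2 col = 0 := fun col => by rw [h0]; rfl
    have hb : ∀ i, barR h (c (.inl i)) = 0 := fun i => by
      rw [← genMap_fst_inl h A01b S T A01 A02 A12 c i]; exact h0fst _
    have hk1 : ∀ j, c (.inr (.inl j)) = 0 := fun j => by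
      rw [← genMap_snd_inl h A01b S T A01 A02 A12 c j]; exact h0snd _
    refine ⟨hb, hk1, fun j => ?_⟩
    have := h0snd (Sum.inr (Sum.inl j))
    rw [genMap_snd_inr_inl] at this
    simp only [hk1, zero_mul, Finset.sum_const_zero, zero_add] at this
    have h2 : c (.inr (.inr j)) + c (.inr (.inr j)) = 0 := by
      rw [← two_mul, mul_comm]; exact this
    exact barR_eq_zero_of_two_mul h hm _ h2
  · rintro ⟨hb, hk1, hk2⟩
    have hb2 : ∀ i, c (.inl i) + c (.inl i) = 0 :=
      fun i => two_mul_eq_zero_of_barR h _ (hb i)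
    have hk22 : ∀ j, c (.inr (.inr j)) + c (.inr (.inr j)) = 0 :=
      fun j => two_mul_eq_zero_of_barR h _ (hk2 j)
    refine Prod.ext (funext fun col => ?_) (funext fun col => ?_)
    · rcases col with j | j
      · rw [genMap_fst_inl]; exact hb j
      · rw [genMap_fst_inr]
        simp only [hb, hk1, map_zero, zero_mul, Finset.sum_const_zero, add_zero]
        rfl
    · rcases col with j | j
      · rw [genMap_snd_inl]; exact hk1 j
      rcases j with j | j
      · rw [genMap_snd_inr_inl]
        simp only [hk1, zero_mul, Finset.sum_const_zero, zero_add]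
        show c (.inr (.inr j)) * 2 = 0
        rw [mul_comm, two_mul]; exact hk22 j
      · rw [genMap_snd_inr_inr]
        have e1 : ∀ i : Fin k0, c (.inl i) * (2 * T i j) = 0 := fun i => by
          rw [show c (.inl i) * (2 * T i j) = (c (.inl i) * 2) * T i j by ring,
            mul_comm (c (.inl i)) 2, two_mul, hb2 i, zero_mul]
        have e3 : ∀ i : Fin k2, c (.inr (.inr i)) * (2 * A12 i j) = 0 := fun i => by
          rw [show c (.inr (.inr i)) * (2 * A12 i j) = (c (.inr (.inr i)) * 2) * A12 i j by ring,
            mul_comm _ (2 : R4 h), two_mul, hk22 i, zero_mul]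
        simp only [e1, e3, hk1, zero_mul, Finset.sum_const_zero, add_zero, zero_add]
        rfl

lemma rowSpan_eq_range :
    rowSpan h (stdGenRows h A01b S T A01 A02 A12) = Set.range genF := by
  ext v
  constructor
  · rintro ⟨c, rfl⟩
    exact ⟨c, rfl⟩
  · rintro ⟨c, rfl⟩
    exact ⟨c, rfl⟩

def kerEquiv (hm : h.Monic) :
    {c : (Fin k0 ⊕ Fin k1 ⊕ Fin k2) → R4 h // genF c = 0} ≃
      ((Fin k0 → {β : R4 h // barR h β = 0}) × (Fin k2 → {β : R4 h // barR h β = 0})) where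
  toFun c :=
    (fun i => ⟨c.1 (.inl i),
        ((genMap_eq_zero_iff h A01b S T A01 A02 A12 hm c.1).mp c.2).1 i⟩,
     fun j => ⟨c.1 (.inr (.inr j)),
        ((genMap_eq_zero_iff h A01b S T A01 A02 A12 hm c.1).mp c.2).2.2 j⟩)
  invFun p :=
    ⟨fun x => match x with
      | .inl i => (p.1 i).1
      | .inr (.inl _) => 0
      | .inr (.inr j) => (p.2 j).1,
     by
      rw [genMap_eq_zero_iff h A01b S T A01 A02 A12 hm]
      exact ⟨fun i => (p.1 i).2, fun j => rfl, fun j => (p.2 j).2⟩⟩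
  left_inv c := by
    apply Subtype.ext
    funext x
    rcases x with i | x
    · rfl
    rcases x with j | j
    · exact (((genMap_eq_zero_iff h A01b S T A01 A02 A12 hm c.1).mp c.2).2.1 j).symm
    · rfl
  right_inv p := rfl

end Gen

/-- A `Z₂Z₄[ξ]`-linear code of type `(r,s;k₀;k₁,k₂)`, where `ξ` is a
root of an irreducible polynomial of degree `t`, has exactly `2^{t(k₀+2k₁+k₂)}`
codewords. -/
theorem card_of_type_code
    (t : ℕ) (ht : 1 ≤ t) (h : Z4[X]) (hbp : BasicPrimitive h t)
    (r s k0 k1 k2 : ℕ) (hr : 0 < r) (hs : 0 < s)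
    (C : Set ((Fin r → R2 h) × (Fin s → R4 h))) (hC : IsZ2Z4Linear h C)
    (htype : IsTypeCode h r s k0 k1 k2 C) :
    Nat.card C = 2 ^ (t * (k0 + 2 * k1 + k2)) := by
  obtain ⟨hmon, hdeg, -, -⟩ := hbp
  obtain ⟨A01b, S, T, A01, A02, A12, e2, e4, himg⟩ := htype
  haveI : Finite (R4 h) := finite_R4 h hmon
  haveI : Finite (R2 h) := finite_R2 h hmon
  set φ : ((Fin r → R2 h) × (Fin s → R4 h)) ≃
      (((Fin k0 ⊕ Fin (r - k0)) → R2 h) × ((Fin k1 ⊕ Fin k2 ⊕ Fin (s - k1 - k2)) → R4 h)) :=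
    Equiv.prodCongr (Equiv.arrowCongr e2 (Equiv.refl (R2 h)))
      (Equiv.arrowCongr e4 (Equiv.refl (R4 h))) with hφ
  have hφap : (fun v : (Fin r → R2 h) × (Fin s → R4 h) => (v.1 ∘ e2.symm, v.2 ∘ e4.symm)) = ⇑φ := by
    funext v
    simp [hφ, Equiv.prodCongr, Equiv.arrowCongr]
    rfl
  rw [hφap] at himg
  set f := genMap h A01b S T A01 A02 A12 with hf
  have hrange : φ '' C = Set.range ⇑f := by
    rw [himg, rowSpan_eq_range]
  have hcardC : Nat.card C = Nat.card ↥(Set.range ⇑f) := by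
    rw [← hrange, Nat.card_image_of_injective φ.injective]
  -- counting
  have h1 : Nat.card ((Fin k0 ⊕ Fin k1 ⊕ Fin k2) → R4 h)
      = Nat.card ((((Fin k0 ⊕ Fin k1 ⊕ Fin k2) → R4 h)) ⧸ f.ker) * Nat.card f.ker :=
    AddSubgroup.card_eq_card_quotient_mul_card_addSubgroup f.ker
  have h2 : Nat.card ((((Fin k0 ⊕ Fin k1 ⊕ Fin k2) → R4 h)) ⧸ f.ker)
      = Nat.card ↥(Set.range ⇑f) := by
    refine (Nat.card_congr (QuotientAddGroup.quotientKerEquivRange f).toEquiv).trans ?_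
    exact Nat.card_congr (Equiv.subtypeEquivRight fun x => by
      simp [AddMonoidHom.mem_range, Set.mem_range])
  have hK : Nat.card {β : R4 h // barR h β = 0} = 2 ^ t := by
    rw [card_ker_barR h hmon, hdeg]
  have h3 : Nat.card f.ker = 2 ^ (t * k0) * 2 ^ (t * k2) := by
    have e : ↥f.ker ≃ ((Fin k0 → {β : R4 h // barR h β = 0}) ×
        (Fin k2 → {β : R4 h // barR h β = 0})) :=
      (Equiv.subtypeEquivRight fun x => AddMonoidHom.mem_ker (f := f)).trans
        (kerEquiv h A01b S T A01 A02 A12 hmon)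
    rw [Nat.card_congr e, Nat.card_prod, Nat.card_pi, Nat.card_pi]
    simp only [hK, Finset.prod_const, Finset.card_univ, Fintype.card_fin]
    rw [← pow_mul, ← pow_mul]
  have h4 : Nat.card ((Fin k0 ⊕ Fin k1 ⊕ Fin k2) → R4 h) = 2 ^ (2 * t * (k0 + k1 + k2)) := by
    rw [Nat.card_pi]
    simp only [card_R4 h hmon, hdeg, Finset.prod_const, Finset.card_univ]
    rw [show (4:ℕ) = 2 ^ 2 from rfl, ← pow_mul, ← pow_mul]
    congr 1
    simp [Fintype.card_sum]
    ring
  rw [h2, h3, h4] at h1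
  have hexp : 2 * t * (k0 + k1 + k2) = t * (k0 + 2 * k1 + k2) + (t * k0 + t * k2) := by ring
  rw [hexp, pow_add, pow_add 2 (t * k0) (t * k2)] at h1
  rw [hcardC]
  exact Nat.eq_of_mul_eq_mul_right (by positivity) h1.symm
end
end

section
/- If C is a Z₂Z₄[ξ]-linear code of type (r,s;k₀;k₁,k₂), then the dual code C⊥ is a Z₂Z₄[ξ]-linear code of type (r, s; r−k₀; s−k₁−k₂, k₂). -/
set_option synthInstance.maxHeartbeats 1000000
set_option maxHeartbeats 2000000

noncomputable section
open Polynomial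

-- Section A/B/C lemmas
namespace Aux
variable (h : Z4[X])

lemma bar_val (a : Z2) : bar ((a.val : Z4)) = a := by revert a; decide

lemma half_spec (c : Z4) (hc : bar c = 0) : c = 2 * (if c = 2 then 1 else 0) := by
  revert hc; revert c; decide

lemma two_of_twomul (c : Z4) (hc : 2 * c = 0) : bar c = 0 := by revert hc; revert c; decide

lemma two_Z2X : (2 : Z2[X]) = 0 := by
  rw [← map_ofNat (C : Z2 →+* Z2[X]) 2, show (2:Z2) = 0 from rfl, map_zero]

/-- lifting a `Z2[X]` polynomial coefficientwise to `Z4[X]`. -/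
def lift2 (q : Z2[X]) : Z4[X] := q.sum fun i a => C ((a.val : Z4)) * X ^ i

lemma map_bar_lift2 (q : Z2[X]) : (lift2 q).map bar = q := by
  unfold lift2
  rw [Polynomial.sum_def]
  rw [Polynomial.map_sum]
  have : ∀ i ∈ q.support, (C ((q.coeff i).val : Z4) * X ^ i).map bar = C (q.coeff i) * X ^ i := by
    intro i _
    rw [Polynomial.map_mul, Polynomial.map_C, Polynomial.map_pow, Polynomial.map_X, bar_val]
  rw [Finset.sum_congr rfl this]
  have h2 := Polynomial.sum_C_mul_X_pow_eq q
  rw [Polynomial.sum_def] at h2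
  exact h2

lemma exists_two_dvd (p : Z4[X]) (hp : p.map bar = 0) : ∃ t : Z4[X], p = 2 * t := by
  refine ⟨p.sum fun i a => C (if a = 2 then 1 else 0) * X ^ i, ?_⟩
  conv_lhs => rw [← Polynomial.sum_C_mul_X_pow_eq p]
  rw [Polynomial.sum, Polynomial.sum, Finset.mul_sum]
  refine Finset.sum_congr rfl fun i _ => ?_
  have hc : bar (p.coeff i) = 0 := by
    have := congrArg (fun q => Polynomial.coeff q i) hp
    simpa using this
  rw [← mul_assoc, show ((2:Z4[X]) = C 2) from (map_ofNat (C : Z4 →+* Z4[X]) 2).symm, ← map_mul,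
    ← half_spec _ hc]

lemma mk_modByMonic {q : Z2[X]} (hq : q.Monic) (p : Z2[X]) :
    Ideal.Quotient.mk (Ideal.span {q}) (p %ₘ q) = Ideal.Quotient.mk _ p := by
  conv_rhs => rw [← Polynomial.modByMonic_add_div p q]
  rw [map_add, Ideal.Quotient.eq_zero_iff_mem.mpr (Ideal.mem_span_singleton.mpr ⟨_, rfl⟩ : q * (p /ₘ q) ∈ Ideal.span {q}), add_zero]

lemma barR_mk (p : Z4[X]) :
    barR h (Ideal.Quotient.mk _ p) = Ideal.Quotient.mk _ (p.map bar) :=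
  Ideal.quotientMap_mk

lemma mk_out4 (x : R4 h) : Ideal.Quotient.mk (Ideal.span {h}) (Quotient.out x) = x :=
  Quotient.out_eq x

lemma mk_out2 (x : R2 h) : Ideal.Quotient.mk (Ideal.span {h.map bar}) (Quotient.out x) = x :=
  Quotient.out_eq x

variable (hmo : h.Monic)
include hmo

lemma barR_iota (z : R2 h) : barR h (iota h z) = z := by
  rw [iota, barR_mk]
  have : ((rep2 h z).sum fun i a => C ((a.val : Z4)) * X ^ i).map bar = rep2 h z :=
    map_bar_lift2 _
  rw [this, rep2, mk_modByMonic (hmo.map bar), mk_out2]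

lemma ker_barR {x : R4 h} (hx : barR h x = 0) : ∃ y, x = 2 * y := by
  obtain ⟨p, rfl⟩ := Ideal.Quotient.mk_surjective x
  rw [barR_mk, Ideal.Quotient.eq_zero_iff_mem, Ideal.mem_span_singleton] at hx
  obtain ⟨g, hg⟩ := hx
  obtain ⟨t, ht⟩ := exists_two_dvd (p - h * lift2 g) (by
    rw [Polynomial.map_sub, Polynomial.map_mul, map_bar_lift2, hg, sub_self])
  refine ⟨Ideal.Quotient.mk _ t, ?_⟩
  have : p = h * lift2 g + 2 * t := by linear_combination ht
  rw [this, map_add, map_mul, Ideal.Quotient.eq_zero_iff_mem.mpr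
    (Ideal.mem_span_singleton.mpr dvd_rfl), zero_mul, zero_add, map_mul, map_ofNat]

lemma two_torsion {x : R4 h} (hx : 2 * x = 0) : ∃ y, x = 2 * y := by
  obtain ⟨p, rfl⟩ := Ideal.Quotient.mk_surjective x
  have h2 : (Ideal.Quotient.mk (Ideal.span {h})) (2 * p) = 0 := by
    rw [map_mul, map_ofNat]; exact hx
  rw [Ideal.Quotient.eq_zero_iff_mem, Ideal.mem_span_singleton] at h2
  obtain ⟨q, hq⟩ := h2
  have hq2 : (h.map bar) * (q.map bar) = 0 := by
    have := congrArg (Polynomial.map bar) hq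
    rw [Polynomial.map_mul, Polynomial.map_mul] at this
    have hb2 : (2:Z4[X]).map bar = 0 := by rw [Polynomial.map_ofNat, two_Z2X]
    rw [hb2, zero_mul] at this
    exact this.symm
  have hmapq : q.map bar = 0 := by
    rcases mul_eq_zero.mp hq2 with h0 | h0
    · exact absurd h0 (hmo.map bar).ne_zero
    · exact h0
  obtain ⟨q', hq'⟩ := exists_two_dvd q hmapq
  have key : (p - h * q').map bar = 0 := by
    have h2p : 2 * (p - h * q') = 0 := by
      have : 2 * p = h * (2 * q') := by rw [← hq', hq]
      ring_nf
      ring_nf at this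
      linear_combination this
    ext n
    rw [Polynomial.coeff_map, Polynomial.coeff_zero]
    refine two_of_twomul _ ?_
    have := congrArg (fun r => Polynomial.coeff r n) h2p
    simpa using this
  obtain ⟨t, ht⟩ := exists_two_dvd _ key
  refine ⟨Ideal.Quotient.mk _ t, ?_⟩
  have : p = h * q' + 2 * t := by linear_combination ht
  rw [this, map_add, map_mul, Ideal.Quotient.eq_zero_iff_mem.mpr
    (Ideal.mem_span_singleton.mpr dvd_rfl), zero_mul, zero_add, map_mul, map_ofNat]

end Aux
namespace Aux

set_option linter.unusedSectionVars false
variable (h : Z4[X]) (hmo : h.Monic)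
include hmo

omit hmo in
lemma four_zero : (4 : R4 h) = 0 := by
  have h4 : (4:Z4[X]) = 0 := by
    rw [← map_ofNat (C : Z4 →+* Z4[X]) 4, show (4:Z4) = 0 from rfl, map_zero]
  calc (4 : R4 h) = Ideal.Quotient.mk _ (4:Z4[X]) := (map_ofNat _ 4).symm
    _ = 0 := by rw [h4, map_zero]

omit hmo in
lemma two_R2_zero : (2 : R2 h) = 0 := by
  calc (2 : R2 h) = Ideal.Quotient.mk _ (2:Z2[X]) := (map_ofNat _ 2).symm
    _ = 0 := by rw [two_Z2X, map_zero]

omit hmo in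
lemma two_two (x : R4 h) : 2 * (2 * x) = 0 := by
  rw [← mul_assoc, show (2:R4 h)*2 = 4 by ring, four_zero h, zero_mul]

lemma two_mul_eq (x : R4 h) : 2 * x = 2 * iota h (barR h x) := by
  have hk : barR h (x - iota h (barR h x)) = 0 := by
    rw [map_sub, barR_iota h hmo, sub_self]
  obtain ⟨y, hy⟩ := ker_barR h hmo hk
  have : x = iota h (barR h x) + 2 * y := by linear_combination hy
  conv_lhs => rw [this]
  rw [mul_add, two_two h, add_zero]

lemma two_iota_zero : 2 * iota h (0 : R2 h) = 0 := by
  have := two_mul_eq h hmo 0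
  rw [mul_zero, map_zero] at this
  exact this.symm

lemma two_iota_eq_zero {z : R2 h} (hz : 2 * iota h z = 0) : z = 0 := by
  obtain ⟨y, hy⟩ := two_torsion h hmo hz
  have : z = barR h (iota h z) := (barR_iota h hmo z).symm
  rw [this, hy, map_mul, map_ofNat, two_R2_zero h, zero_mul]

lemma two_iota_add (x y : R2 h) : 2 * iota h (x + y) = 2 * iota h x + 2 * iota h y := by
  have := two_mul_eq h hmo (iota h x + iota h y)
  rw [map_add, barR_iota h hmo, barR_iota h hmo] at this
  rw [← this, mul_add]

lemma two_iota_mul (x y : R2 h) : 2 * iota h (x * y) = 2 * (iota h x * iota h y) := by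
  have := two_mul_eq h hmo (iota h x * iota h y)
  rw [map_mul, barR_iota h hmo, barR_iota h hmo] at this
  exact this.symm

lemma mul_two_iota (γ : R4 h) (z : R2 h) : γ * (2 * iota h z) = 2 * iota h (barR h γ * z) := by
  have := two_mul_eq h hmo (γ * iota h z)
  rw [map_mul, barR_iota h hmo] at this
  rw [← this]; ring

lemma two_iota_sum {ι : Type*} (s : Finset ι) (f : ι → R2 h) :
    2 * ∑ i ∈ s, iota h (f i) = 2 * iota h (∑ i ∈ s, f i) := by
  have := two_mul_eq h hmo (∑ i ∈ s, iota h (f i))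
  rw [map_sum] at this
  conv_rhs at this => rw [Finset.sum_congr rfl fun i _ => barR_iota h hmo (f i)]
  exact this



lemma iota_zero : iota h (0 : R2 h) = 0 := by
  have hd : (h.map bar) ∣ Quotient.out (0 : R2 h) := by
    refine Ideal.mem_span_singleton.mp ?_
    rw [← Ideal.Quotient.eq_zero_iff_mem, mk_out2]
  have : rep2 h (0 : R2 h) = 0 :=
    (Polynomial.modByMonic_eq_zero_iff_dvd (hmo.map bar)).mpr hd
  rw [iota, this]
  simp


end Aux
namespace Aux
set_option linter.unusedSectionVars false
variable (h : Z4[X]) (hmo : h.Monic)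
variable {α β : Type*} [Fintype α] [Fintype β]
include hmo

lemma innerP_eq (u v : (α → R2 h) × (β → R4 h)) :
    innerP h u v = 2 * iota h (∑ i, u.1 i * v.1 i) + ∑ j, u.2 j * v.2 j := by
  rw [innerP, two_iota_sum h hmo]

omit hmo in
lemma innerP_comm (u v : (α → R2 h) × (β → R4 h)) : innerP h u v = innerP h v u := by
  simp only [innerP, mul_comm]

lemma innerP_add_right (u v w : (α → R2 h) × (β → R4 h)) :
    innerP h u (v + w) = innerP h u v + innerP h u w := by
  rw [innerP_eq h hmo, innerP_eq h hmo, innerP_eq h hmo]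
  have h1 : ∑ i, u.1 i * (v + w).1 i = (∑ i, u.1 i * v.1 i) + ∑ i, u.1 i * w.1 i := by
    rw [← Finset.sum_add_distrib]
    exact Finset.sum_congr rfl fun i _ => by
      show u.1 i * (v.1 i + w.1 i) = _ ; ring
  have h2 : ∑ j, u.2 j * (v + w).2 j = (∑ j, u.2 j * v.2 j) + ∑ j, u.2 j * w.2 j := by
    rw [← Finset.sum_add_distrib]
    exact Finset.sum_congr rfl fun j _ => by
      show u.2 j * (v.2 j + w.2 j) = _ ; ring
  rw [h1, h2, two_iota_add h hmo]; ring

lemma innerP_smul_right (γ : R4 h) (u v : (α → R2 h) × (β → R4 h)) :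
    innerP h u (smulStar h γ v) = γ * innerP h u v := by
  rw [innerP_eq h hmo, innerP_eq h hmo]
  have h1 : ∑ i, u.1 i * (smulStar h γ v).1 i = barR h γ * ∑ i, u.1 i * v.1 i := by
    rw [Finset.mul_sum]
    exact Finset.sum_congr rfl fun i _ => by simp [smulStar]; ring
  have h2 : ∑ j, u.2 j * (smulStar h γ v).2 j = γ * ∑ j, u.2 j * v.2 j := by
    rw [Finset.mul_sum]
    exact Finset.sum_congr rfl fun j _ => by simp [smulStar]; ring
  rw [h1, h2, ← mul_two_iota h hmo]; ring

lemma innerP_zero_right (u : (α → R2 h) × (β → R4 h)) : innerP h u 0 = 0 := by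
  rw [innerP_eq h hmo]
  simp [two_iota_zero h hmo]

lemma innerP_sum_right {ι : Type*} (s : Finset ι) (u : (α → R2 h) × (β → R4 h))
    (f : ι → (α → R2 h) × (β → R4 h)) :
    innerP h u (∑ i ∈ s, f i) = ∑ i ∈ s, innerP h u (f i) := by
  classical
  induction s using Finset.induction with
  | empty => simpa using innerP_zero_right h hmo u
  | insert x s hx ih =>
      rw [Finset.sum_insert hx, Finset.sum_insert hx, innerP_add_right h hmo, ih]

omit hmo

lemma sum_smulStar_fst {ι : Type*} [Fintype ι] (c : ι → R4 h)
    (f : ι → (α → R2 h) × (β → R4 h)) (j : α) :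
    (∑ i, smulStar h (c i) (f i)).1 j = ∑ i, barR h (c i) * (f i).1 j := by
  rw [Prod.fst_sum, Finset.sum_apply]
  rfl

lemma sum_smulStar_snd {ι : Type*} [Fintype ι] (c : ι → R4 h)
    (f : ι → (α → R2 h) × (β → R4 h)) (j : β) :
    (∑ i, smulStar h (c i) (f i)).2 j = ∑ i, c i * (f i).2 j := by
  rw [Prod.snd_sum, Finset.sum_apply]
  rfl

lemma mem_rowSpan {ι : Type*} [Fintype ι] [DecidableEq ι]
    (rows : ι → (α → R2 h) × (β → R4 h)) (i0 : ι) : rows i0 ∈ rowSpan h rows := by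
  refine ⟨fun i => if i = i0 then 1 else 0, ?_⟩
  refine Prod.ext (funext fun j => ?_) (funext fun j => ?_)
  · rw [sum_smulStar_fst]
    simp [apply_ite (barR h), ite_mul]
  · rw [sum_smulStar_snd]
    simp [ite_mul]

include hmo in
lemma dual_rowSpan {ι : Type*} [Fintype ι] [DecidableEq ι]
    (rows : ι → (α → R2 h) × (β → R4 h)) :
    dualCode h (rowSpan h rows) = {v | ∀ i, innerP h (rows i) v = 0} := by
  ext v
  constructor
  · intro hv i
    exact hv _ (mem_rowSpan h rows i)
  · rintro hv u ⟨c, rfl⟩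
    rw [innerP_comm, innerP_sum_right h hmo]
    rw [Finset.sum_congr rfl fun i _ => innerP_smul_right h hmo (c i) v (rows i)]
    rw [Finset.sum_congr rfl fun i _ => by rw [innerP_comm h v (rows i), hv i, mul_zero]]
    simp

/-- coordinate permutation map. -/
def reMap {α' β' : Type*} (eα : α ≃ α') (eβ : β ≃ β') (v : (α → R2 h) × (β → R4 h)) :
    (α' → R2 h) × (β' → R4 h) := (v.1 ∘ eα.symm, v.2 ∘ eβ.symm)

variable {α' β' : Type*} [Fintype α'] [Fintype β'] (eα : α ≃ α') (eβ : β ≃ β')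

lemma reMap_reMap {α'' β'' : Type*} (eα' : α' ≃ α'') (eβ' : β' ≃ β'')
    (v : (α → R2 h) × (β → R4 h)) :
    reMap h eα' eβ' (reMap h eα eβ v) = reMap h (eα.trans eα') (eβ.trans eβ') v := rfl

lemma reMap_inv (v : (α → R2 h) × (β → R4 h)) :
    reMap h eα.symm eβ.symm (reMap h eα eβ v) = v := by
  refine Prod.ext (funext fun j => ?_) (funext fun j => ?_) <;> simp [reMap]

lemma innerP_reMap (u v : (α → R2 h) × (β → R4 h)) :
    innerP h (reMap h eα eβ u) (reMap h eα eβ v) = innerP h u v := by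
  rw [innerP, innerP]
  congr 1
  · congr 1
    exact Equiv.sum_comp eα.symm fun i => iota h (u.1 i * v.1 i)
  · exact Equiv.sum_comp eβ.symm fun j => u.2 j * v.2 j

lemma reMap_smulStar (γ : R4 h) (v : (α → R2 h) × (β → R4 h)) :
    reMap h eα eβ (smulStar h γ v) = smulStar h γ (reMap h eα eβ v) := rfl

lemma reMap_sum {ι : Type*} (s : Finset ι) (f : ι → (α → R2 h) × (β → R4 h)) :
    reMap h eα eβ (∑ i ∈ s, f i) = ∑ i ∈ s, reMap h eα eβ (f i) := by
  refine Prod.ext (funext fun j => ?_) (funext fun j => ?_)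
  · rw [Prod.fst_sum, Finset.sum_apply]
    show (∑ i ∈ s, f i).1 (eα.symm j) = _
    rw [Prod.fst_sum, Finset.sum_apply]
    rfl
  · rw [Prod.snd_sum, Finset.sum_apply]
    show (∑ i ∈ s, f i).2 (eβ.symm j) = _
    rw [Prod.snd_sum, Finset.sum_apply]
    rfl

lemma reMap_rowSpan {ι : Type*} [Fintype ι] (rows : ι → (α → R2 h) × (β → R4 h)) :
    reMap h eα eβ '' rowSpan h rows = rowSpan h (fun i => reMap h eα eβ (rows i)) := by
  ext v
  constructor
  · rintro ⟨u, ⟨c, rfl⟩, rfl⟩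
    exact ⟨c, by rw [reMap_sum]; exact Finset.sum_congr rfl fun i _ => reMap_smulStar h eα eβ _ _⟩
  · rintro ⟨c, rfl⟩
    refine ⟨∑ i, smulStar h (c i) (rows i), ⟨c, rfl⟩, ?_⟩
    rw [reMap_sum]
    exact Finset.sum_congr rfl fun i _ => reMap_smulStar h eα eβ _ _

lemma dual_reMap (C : Set ((α → R2 h) × (β → R4 h))) :
    dualCode h (reMap h eα eβ '' C) = reMap h eα eβ '' dualCode h C := by
  ext v
  constructor
  · intro hv
    refine ⟨reMap h eα.symm eβ.symm v, ?_, ?_⟩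
    · intro u hu
      have := hv (reMap h eα eβ u) ⟨u, hu, rfl⟩
      rwa [← innerP_reMap h eα eβ u (reMap h eα.symm eβ.symm v),
        show reMap h eα eβ (reMap h eα.symm eβ.symm v) = v from ?_]
      rw [reMap_reMap]
      have : v = reMap h eα eβ (reMap h eα.symm eβ.symm v) := by
        rw [reMap_reMap]
        refine Prod.ext (funext fun j => ?_) (funext fun j => ?_) <;> simp [reMap]
      exact this.symm
    · rw [reMap_reMap]
      refine Prod.ext (funext fun j => ?_) (funext fun j => ?_) <;> simp [reMap]
  · rintro ⟨w, hw, rfl⟩ u ⟨u0, hu0, rfl⟩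
    rw [innerP_reMap]
    exact hw u0 hu0

end Aux
namespace Aux
set_option linter.unusedSectionVars false
variable (h : Z4[X]) (hmo : h.Monic)
variable {r s k0 k1 k2 : ℕ}
variable (A01b : Matrix (Fin k0) (Fin (r - k0)) (R2 h))
    (S : Matrix (Fin k1) (Fin (r - k0)) (R2 h))
    (T : Matrix (Fin k0) (Fin (s - k1 - k2)) (R4 h))
    (A01 : Matrix (Fin k1) (Fin k2) (R4 h))
    (A02 : Matrix (Fin k1) (Fin (s - k1 - k2)) (R4 h))
    (A12 : Matrix (Fin k2) (Fin (s - k1 - k2)) (R4 h))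
include hmo

lemma ortho (i j) :
    innerP h (stdGenRows h A01b S T A01 A02 A12 i) (stdParityRows h A01b S T A01 A02 A12 j) = 0 := by
  rcases i with i | i | i <;> rcases j with j | j | j
  all_goals
    simp only [innerP, stdGenRows, stdParityRows, Fintype.sum_sum_type,
      apply_ite (iota h), ite_mul, mul_ite, mul_zero, zero_mul, mul_one, one_mul,
      iota_zero h hmo, Finset.sum_ite_eq, Finset.sum_ite_eq', Finset.mem_univ, if_true,
      Finset.sum_const_zero, add_zero, zero_add, mul_neg, neg_mul]
  case inl.inl =>
    rw [mul_add, ← two_iota_add h hmo, neg_add_cancel, iota_zero h hmo, mul_zero]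
  case inl.inr.inl =>
    rw [two_mul_eq h hmo (T i j), ← two_iota_add h hmo, neg_add_cancel,
      iota_zero h hmo, mul_zero]
  case inr.inl.inl => ring
  case inr.inl.inr.inl =>
    have e : ∑ x, A01 i x * -A12 x j = -(∑ c, A12 c j * A01 i c) := by
      rw [← Finset.sum_neg_distrib]
      exact Finset.sum_congr rfl fun x _ => by ring
    rw [e]; ring
  case inr.inl.inr.inr => ring
  case inr.inr.inr.inl => ring
  case inr.inr.inr.inr =>
    split_ifs with hij
    · rw [show (2:R4 h)*2 = 4 by ring, four_zero h]
    · rfl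
end Aux
namespace Aux
set_option linter.unusedSectionVars false
variable (h : Z4[X]) (hmo : h.Monic)
variable {r s k0 k1 k2 : ℕ}
variable (A01b : Matrix (Fin k0) (Fin (r - k0)) (R2 h))
    (S : Matrix (Fin k1) (Fin (r - k0)) (R2 h))
    (T : Matrix (Fin k0) (Fin (s - k1 - k2)) (R4 h))
    (A01 : Matrix (Fin k1) (Fin k2) (R4 h))
    (A02 : Matrix (Fin k1) (Fin (s - k1 - k2)) (R4 h))
    (A12 : Matrix (Fin k2) (Fin (s - k1 - k2)) (R4 h))
include hmo

theorem dual_span :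
    dualCode h (rowSpan h (stdGenRows h A01b S T A01 A02 A12))
      = rowSpan h (stdParityRows h A01b S T A01 A02 A12) := by
  rw [dual_rowSpan h hmo]
  ext v
  constructor
  · intro hv
    -- equations from orthogonality to the three blocks of generator rows
    have E1 : ∀ i : Fin k0, v.1 (Sum.inl i) = -(∑ j, A01b i j * v.1 (Sum.inr j))
        - ∑ j, barR h (T i j) * barR h (v.2 (Sum.inr (Sum.inr j))) := by
      intro i
      have h0 := hv (Sum.inl i)
      rw [innerP] at h0
      rw [Fintype.sum_sum_type, Fintype.sum_sum_type, Fintype.sum_sum_type] at h0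
      simp only [stdGenRows, ite_mul, one_mul, zero_mul, mul_zero, apply_ite (iota h),
        iota_zero h hmo, Finset.sum_ite_eq, Finset.mem_univ, if_true, zero_add, add_zero,
        Finset.sum_const_zero] at h0
      have hT : ∑ x, 2 * T i x * v.2 (Sum.inr (Sum.inr x))
          = 2 * iota h (∑ x, barR h (T i x) * barR h (v.2 (Sum.inr (Sum.inr x)))) := by
        rw [← two_iota_sum h hmo, Finset.mul_sum]
        refine Finset.sum_congr rfl fun x _ => ?_
        rw [← map_mul, ← two_mul_eq h hmo]; ring
      rw [hT, mul_add, two_iota_sum h hmo, ← two_iota_add h hmo, ← two_iota_add h hmo] at h0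
      have hz := two_iota_eq_zero h hmo h0
      linear_combination hz
    have E2 : ∀ i : Fin k1, v.2 (Sum.inl i)
        = -(2 * iota h (∑ j, S i j * v.1 (Sum.inr j)))
          - ∑ c, A01 i c * v.2 (Sum.inr (Sum.inl c))
          - ∑ j, A02 i j * v.2 (Sum.inr (Sum.inr j)) := by
      intro i
      have h0 := hv (Sum.inr (Sum.inl i))
      rw [innerP] at h0
      rw [Fintype.sum_sum_type, Fintype.sum_sum_type, Fintype.sum_sum_type] at h0
      simp only [stdGenRows, ite_mul, one_mul, zero_mul, mul_zero, apply_ite (iota h),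
        iota_zero h hmo, Finset.sum_ite_eq, Finset.mem_univ, if_true, zero_add, add_zero,
        Finset.sum_const_zero] at h0
      rw [two_iota_sum h hmo] at h0
      linear_combination h0
    have E3 : ∀ i : Fin k2, 2 * (v.2 (Sum.inr (Sum.inl i))
        + ∑ j, A12 i j * v.2 (Sum.inr (Sum.inr j))) = 0 := by
      intro i
      have h0 := hv (Sum.inr (Sum.inr i))
      rw [innerP] at h0
      rw [Fintype.sum_sum_type, Fintype.sum_sum_type, Fintype.sum_sum_type] at h0
      simp only [stdGenRows, ite_mul, one_mul, zero_mul, mul_zero, apply_ite (iota h),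
        iota_zero h hmo, Finset.sum_ite_eq, Finset.mem_univ, if_true, zero_add, add_zero,
        Finset.sum_const_zero] at h0
      rw [mul_add, Finset.mul_sum]
      rw [Finset.sum_congr rfl fun j _ => show 2 * (A12 i j * v.2 (Sum.inr (Sum.inr j)))
        = 2 * A12 i j * v.2 (Sum.inr (Sum.inr j)) by ring]
      linear_combination h0
    choose t ht using fun i => two_torsion h hmo (E3 i)
    refine ⟨Sum.elim (fun j => iota h (v.1 (Sum.inr j)))
      (Sum.elim (fun j => v.2 (Sum.inr (Sum.inr j))) t), ?_⟩
    refine Prod.ext (funext fun x => ?_) (funext fun x => ?_)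
    · rw [sum_smulStar_fst, Fintype.sum_sum_type, Fintype.sum_sum_type]
      rcases x with i | i <;>
        simp only [stdParityRows, Sum.elim_inl, Sum.elim_inr, barR_iota h hmo, mul_neg,
          mul_zero, mul_one, ite_mul, mul_ite, zero_mul, one_mul, map_zero,
          Finset.sum_ite_eq, Finset.sum_ite_eq', Finset.mem_univ, if_true,
          Finset.sum_const_zero, add_zero, zero_add]
      · -- R2 coordinates in the k0 block
        have e1 : ∑ x, v.1 (Sum.inr x) * -A01b i x = -∑ j, A01b i j * v.1 (Sum.inr j) := by
          rw [← Finset.sum_neg_distrib]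
          exact Finset.sum_congr rfl fun x _ => by ring
        have e2 : ∑ x, barR h (v.2 (Sum.inr (Sum.inr x))) * -(barR h) (T i x)
            = -∑ j, barR h (T i j) * barR h (v.2 (Sum.inr (Sum.inr j))) := by
          rw [← Finset.sum_neg_distrib]
          exact Finset.sum_congr rfl fun x _ => by ring
        rw [e1, e2, E1 i]
        ring
    · rw [sum_smulStar_snd, Fintype.sum_sum_type, Fintype.sum_sum_type]
      rcases x with i | i | i <;>
        simp only [stdParityRows, Sum.elim_inl, Sum.elim_inr, mul_neg,
          mul_zero, mul_one, ite_mul, mul_ite, zero_mul, one_mul,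
          Finset.sum_ite_eq, Finset.sum_ite_eq', Finset.mem_univ, if_true,
          Finset.sum_const_zero, add_zero, zero_add]
      · -- R4 coordinates in the k1 block
        have hA : ∑ x, iota h (v.1 (Sum.inr x)) * -(2 * iota h (S i x))
            = -(2 * iota h (∑ j, S i j * v.1 (Sum.inr j))) := by
          rw [← two_iota_sum h hmo, Finset.mul_sum, ← Finset.sum_neg_distrib]
          refine Finset.sum_congr rfl fun x _ => ?_
          rw [two_iota_mul h hmo]
          ring
        have hB : ∑ x, v.2 (Sum.inr (Sum.inr x)) * (-A02 i x + ∑ c, A12 c x * A01 i c)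
            = -(∑ x, A02 i x * v.2 (Sum.inr (Sum.inr x)))
              + ∑ c, A01 i c * ∑ x, A12 c x * v.2 (Sum.inr (Sum.inr x)) := by
          have hB1 : ∀ x, v.2 (Sum.inr (Sum.inr x)) * (-A02 i x + ∑ c, A12 c x * A01 i c)
              = -(A02 i x * v.2 (Sum.inr (Sum.inr x)))
                + ∑ c, A01 i c * (A12 c x * v.2 (Sum.inr (Sum.inr x))) := by
            intro x
            rw [mul_add]
            congr 1
            · ring
            · rw [Finset.mul_sum]
              exact Finset.sum_congr rfl fun c _ => by ring
          rw [Finset.sum_congr rfl fun x _ => hB1 x, Finset.sum_add_distrib,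
            Finset.sum_neg_distrib]
          congr 1
          rw [Finset.sum_comm]
          exact Finset.sum_congr rfl fun c _ => (Finset.mul_sum _ _ _).symm
        have hC : ∑ x, t x * -(2 * A01 i x)
            = -(∑ c, A01 i c * v.2 (Sum.inr (Sum.inl c))
                + ∑ c, A01 i c * ∑ j, A12 c j * v.2 (Sum.inr (Sum.inr j))) := by
          rw [← Finset.sum_add_distrib, ← Finset.sum_neg_distrib]
          refine Finset.sum_congr rfl fun c _ => ?_
          calc t c * -(2 * A01 i c) = -(A01 i c * (2 * t c)) := by ring
            _ = _ := by rw [← ht c]; ring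
        rw [hA, hB, hC, E2 i]
        ring
      · -- R4 coordinates in the k2 block
        have e : ∑ x, v.2 (Sum.inr (Sum.inr x)) * -A12 i x
            = -∑ j, A12 i j * v.2 (Sum.inr (Sum.inr j)) := by
          rw [← Finset.sum_neg_distrib]
          exact Finset.sum_congr rfl fun x _ => by ring
        rw [e, show t i * 2 = 2 * t i by ring, ← ht i]
        ring
  · rintro ⟨c, rfl⟩ i
    rw [innerP_sum_right h hmo]
    rw [Finset.sum_congr rfl fun j _ => innerP_smul_right h hmo (c j) _ _]
    rw [Finset.sum_congr rfl fun j _ => by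
      rw [ortho h hmo A01b S T A01 A02 A12 i j, mul_zero]]
    simp
end Aux
/-- If `C` is of type `(r,s;k₀;k₁,k₂)` then `C⊥` is of type
`(r,s;r−k₀;s−k₁−k₂,k₂)`. -/
theorem dual_type
    (m : ℕ) (hm : 1 ≤ m) (h : Z4[X]) (hbp : BasicPrimitive h m)
    (r s k0 k1 k2 : ℕ) (hr : 0 < r) (hs : 0 < s)
    (C : Set ((Fin r → R2 h) × (Fin s → R4 h))) (hC : IsZ2Z4Linear h C)
    (htype : IsTypeCode h r s k0 k1 k2 C) :
    IsTypeCode h r s (r - k0) (s - k1 - k2) k2 (dualCode h C) := by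
  obtain ⟨A01b, S, T, A01, A02, A12, e2, e4, hEq⟩ := htype
  have hmo : h.Monic := hbp.1
  have hc2 : k0 + (r - k0) = r := by
    have := Fintype.card_congr e2
    simpa [Fintype.card_sum] using this.symm
  have hc4 : k1 + (k2 + (s - k1 - k2)) = s := by
    have := Fintype.card_congr e4
    simpa [Fintype.card_sum] using this.symm
  have hr0 : r - (r - k0) = k0 := by omega
  have hs0 : s - (s - k1 - k2) - k2 = k1 := by omega
  let τ2 : (Fin k0 ⊕ Fin (r - k0)) ≃ (Fin (r - k0) ⊕ Fin (r - (r - k0))) :=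
    (Equiv.sumComm _ _).trans (Equiv.sumCongr (Equiv.refl _) (finCongr hr0.symm))
  let τ4 : (Fin k1 ⊕ Fin k2 ⊕ Fin (s - k1 - k2)) ≃
      (Fin (s - k1 - k2) ⊕ Fin k2 ⊕ Fin (s - (s - k1 - k2) - k2)) :=
    { toFun := fun x => match x with
        | .inl j => .inr (.inr (Fin.cast hs0.symm j))
        | .inr (.inl j) => .inr (.inl j)
        | .inr (.inr j) => .inl j
      invFun := fun x => match x with
        | .inl j => .inr (.inr j)
        | .inr (.inl j) => .inr (.inl j)
        | .inr (.inr j) => .inl (Fin.cast hs0 j)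
      left_inv := by rintro (j | j | j) <;> rfl
      right_inv := by rintro (j | j | j) <;> rfl }
  refine ⟨fun i j => -(A01b (Fin.cast hr0 j) i),
          fun i j => -(barR h (T (Fin.cast hr0 j) i)),
          fun i j => -(iota h (S (Fin.cast hs0 j) i)),
          fun i j => -(A12 j i),
          fun i j => -(A02 (Fin.cast hs0 j) i) + ∑ c, A12 c i * A01 (Fin.cast hs0 j) c,
          fun i j => -(A01 (Fin.cast hs0 j) i),
          e2.trans τ2, e4.trans τ4, ?_⟩
  have hcomp : (fun v : (Fin r → R2 h) × (Fin s → R4 h) =>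
      (v.1 ∘ (e2.trans τ2).symm, v.2 ∘ (e4.trans τ4).symm))
      = (Aux.reMap h τ2 τ4) ∘ (Aux.reMap h e2 e4) :=
    funext fun v => (Aux.reMap_reMap h e2 e4 τ2 τ4 v).symm
  rw [hcomp, Set.image_comp, ← Aux.dual_reMap h e2 e4 C,
    show Aux.reMap h e2 e4 '' C = rowSpan h (stdGenRows h A01b S T A01 A02 A12) from hEq,
    Aux.dual_span h hmo A01b S T A01 A02 A12,
    Aux.reMap_rowSpan h τ2 τ4 (stdParityRows h A01b S T A01 A02 A12)]
  apply congrArg (rowSpan h)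
  funext ρ
  refine Prod.ext ?_ ?_
  · funext x
    rcases ρ with i | i | i <;> rcases x with j | j <;>
      simp [Aux.reMap, τ2, τ4, stdGenRows, stdParityRows, Equiv.sumCongr,
        finCongr, mul_comm] <;> try ring
  · funext x
    rcases ρ with i | i | i <;> rcases x with j | j | j <;>
      simp [Aux.reMap, τ2, τ4, stdGenRows, stdParityRows, Equiv.sumCongr,
        finCongr, mul_comm] <;> try ring
end
end
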